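/- Let P be an n-dimensional polytope whose vertex set lies in a lattice L, and let S = {v_1, ..., v_{n+1}} be a set of n+1 affinely independent vertices of P. Then every 2-lamination of P (a partition of vert P into two nonempty parts lying in two parallel consecutive lattice hyperplanes) is determined by its intersection with S; in particular P admits at most 2^{n+1} − 2 distinct 2-laminations. -/

import Mathlib

open scoped InnerProductSpace

/-- Two affine functionals agreeing on `n+1` affinely independent points of an
`n`-dimensional Euclidean space agree everywhere. -/
lemma stmt_10_aux (n : ℕ) (S : Fin (n + 1) → EuclideanSpace ℝ (Fin n))
    (hAI : AffineIndependent ℝ S) (f g : EuclideanSpace ℝ (Fin n) →ᵃ[ℝ] ℝ)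
    (h : ∀ i, f (S i) = g (S i)) : ∀ x, f x = g x := by
  have htop : affineSpan ℝ (Set.range S) = ⊤ := by
    rw [hAI.affineSpan_eq_top_iff_card_eq_finrank_add_one]
    simp [finrank_euclideanSpace_fin]
  let B : AffineBasis (Fin (n + 1)) ℝ (EuclideanSpace ℝ (Fin n)) := ⟨S, hAI, htop⟩
  intro x
  have hx := B.affineCombination_coord_eq_self x
  have hw := B.sum_coord_apply_eq_one x
  have hx' : (Finset.univ.affineCombination ℝ S fun i => B.coord i x) = x := hx
  calc f x = f (Finset.univ.affineCombination ℝ S fun i => B.coord i x) := by rw [hx']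
    _ = Finset.univ.affineCombination ℝ (f ∘ S) (fun i => B.coord i x) :=
        Finset.univ.map_affineCombination S _ hw f
    _ = Finset.univ.affineCombination ℝ (g ∘ S) (fun i => B.coord i x) := by
        have : f ∘ S = g ∘ S := funext fun i => h i
        rw [this]
    _ = g (Finset.univ.affineCombination ℝ S fun i => B.coord i x) :=
        (Finset.univ.map_affineCombination S _ hw g).symm
    _ = g x := by rw [hx']

/-- A 2-lamination of a lattice polytope `P` (a partition of its vertex set into
two nonempty parts lying in two consecutive lattice hyperplanes) is determined
by its intersection with a set `S` of `n+1` affinely independent vertices; in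
particular there are at most `2^(n+1) − 2` distinct 2-laminations. -/
theorem stmt_10 (n : ℕ) (b : Module.Basis (Fin n) ℝ (EuclideanSpace ℝ (Fin n)))
    (L : Set (EuclideanSpace ℝ (Fin n)))
    (hL : L = ↑(Submodule.span ℤ (Set.range ⇑b)))
    (V : Set (EuclideanSpace ℝ (Fin n))) (hVL : V ⊆ L)
    (S : Fin (n + 1) → EuclideanSpace ℝ (Fin n))
    (hS : ∀ i, S i ∈ V) (hAI : AffineIndependent ℝ S)
    (IsLam : Set (EuclideanSpace ℝ (Fin n)) × Set (EuclideanSpace ℝ (Fin n)) → Prop)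
    (hIsLam : ∀ p, IsLam p ↔
      ∃ (f : EuclideanSpace ℝ (Fin n) →ᵃ[ℝ] ℝ) (k : ℤ),
        (∀ y ∈ L, ∃ m : ℤ, f y = (m : ℝ)) ∧
        (∀ m : ℤ, ∃ y ∈ L, f y = (m : ℝ)) ∧
        p.1 = {x ∈ V | f x = (k : ℝ)} ∧
        p.2 = {x ∈ V | f x = (k : ℝ) + 1} ∧
        p.1 ∪ p.2 = V ∧ p.1.Nonempty ∧ p.2.Nonempty) :
    Set.InjOn (fun p : Set (EuclideanSpace ℝ (Fin n)) × Set (EuclideanSpace ℝ (Fin n)) =>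
        {i : Fin (n + 1) | S i ∈ p.1}) {p | IsLam p} ∧
      Nat.card {p // IsLam p} ≤ 2 ^ (n + 1) - 2 := by
  classical
  -- injectivity on the lamination set
  have hinj : Set.InjOn (fun p : Set (EuclideanSpace ℝ (Fin n)) ×
      Set (EuclideanSpace ℝ (Fin n)) => {i : Fin (n + 1) | S i ∈ p.1}) {p | IsLam p} := by
    intro p hp q hq heq
    obtain ⟨f, k, -, -, hp1, hp2, hpu, -, -⟩ := (hIsLam p).1 hp
    obtain ⟨g, l, -, -, hq1, hq2, hqu, -, -⟩ := (hIsLam q).1 hq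
    have heq' : ∀ i, S i ∈ p.1 ↔ S i ∈ q.1 := fun i => Set.ext_iff.1 heq i
    -- f and g + (k - l) agree on S
    set g' : EuclideanSpace ℝ (Fin n) →ᵃ[ℝ] ℝ :=
      g + AffineMap.const ℝ (EuclideanSpace ℝ (Fin n)) ((k : ℝ) - (l : ℝ)) with hg'
    have hg'x : ∀ x, g' x = g x + ((k : ℝ) - (l : ℝ)) := fun x => rfl
    have hag : ∀ i, f (S i) = g' (S i) := by
      intro i
      rw [hg'x]
      by_cases hi : S i ∈ p.1
      · have hqi : S i ∈ q.1 := (heq' i).1 hi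
        rw [hp1] at hi; rw [hq1] at hqi
        rw [hi.2, hqi.2]; ring
      · have hpi2 : S i ∈ p.2 := by
          have := hpu ▸ hS i
          rcases this with h | h
          · exact absurd h hi
          · exact h
        have hqi2 : S i ∈ q.2 := by
          have hqi : S i ∉ q.1 := fun h => hi ((heq' i).2 h)
          have := hqu ▸ hS i
          rcases this with h | h
          · exact absurd h hqi
          · exact h
        rw [hp2] at hpi2; rw [hq2] at hqi2
        rw [hpi2.2, hqi2.2]; ring
    have hall : ∀ x, f x = g x + ((k : ℝ) - (l : ℝ)) := by
      intro x
      have := stmt_10_aux n S hAI f g' hag x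
      rwa [hg'x] at this
    have h1 : p.1 = q.1 := by
      rw [hp1, hq1]
      ext x
      simp only [Set.mem_setOf_eq, and_congr_right_iff]
      intro _
      rw [hall x]
      constructor <;> intro h <;> linarith
    have h2 : p.2 = q.2 := by
      rw [hp2, hq2]
      ext x
      simp only [Set.mem_setOf_eq, and_congr_right_iff]
      intro _
      rw [hall x]
      constructor <;> intro h <;> linarith
    exact Prod.ext h1 h2
  refine ⟨hinj, ?_⟩
  -- the trace is never empty nor the whole index set
  have htrace : ∀ p, IsLam p → {i : Fin (n + 1) | S i ∈ p.1} ≠ ∅ ∧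
      {i : Fin (n + 1) | S i ∈ p.1} ≠ Set.univ := by
    intro p hp
    obtain ⟨f, k, -, -, hp1, hp2, hpu, hne1, hne2⟩ := (hIsLam p).1 hp
    constructor
    · intro hemp
      -- all S i in p.2, so f ≡ k+1, so p.1 = ∅
      have hall : ∀ i, f (S i) = (k : ℝ) + 1 := by
        intro i
        have hi : S i ∉ p.1 := fun h => by
          have : i ∈ ({i : Fin (n + 1) | S i ∈ p.1} : Set _) := h
          rw [hemp] at this; exact this
        have hpi2 : S i ∈ p.2 := by
          have := hpu ▸ hS i
          rcases this with h | h
          · exact absurd h hi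
          · exact h
        rw [hp2] at hpi2; exact hpi2.2
      have hconst : ∀ x, f x = (k : ℝ) + 1 := by
        intro x
        exact stmt_10_aux n S hAI f
          (AffineMap.const ℝ (EuclideanSpace ℝ (Fin n)) ((k : ℝ) + 1)) hall x
      obtain ⟨x, hx⟩ := hne1
      rw [hp1] at hx
      have := hx.2
      rw [hconst x] at this
      linarith
    · intro huniv
      have hall : ∀ i, f (S i) = (k : ℝ) := by
        intro i
        have hi : S i ∈ p.1 := by
          have : i ∈ ({i : Fin (n + 1) | S i ∈ p.1} : Set _) := huniv ▸ Set.mem_univ i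
          exact this
        rw [hp1] at hi; exact hi.2
      have hconst : ∀ x, f x = (k : ℝ) := by
        intro x
        exact stmt_10_aux n S hAI f
          (AffineMap.const ℝ (EuclideanSpace ℝ (Fin n)) ((k : ℝ))) hall x
      obtain ⟨x, hx⟩ := hne2
      rw [hp2] at hx
      have := hx.2
      rw [hconst x] at this
      linarith
  -- build an injection into the collection of proper nonempty subsets
  let F : {p // IsLam p} → {A : Set (Fin (n + 1)) // A ≠ ∅ ∧ A ≠ Set.univ} :=
    fun p => ⟨{i : Fin (n + 1) | S i ∈ p.1.1}, htrace p.1 p.2⟩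
  have hFinj : Function.Injective F := by
    intro p q hpq
    have : ({i : Fin (n + 1) | S i ∈ p.1.1} : Set _) = {i : Fin (n + 1) | S i ∈ q.1.1} :=
      congrArg Subtype.val hpq
    exact Subtype.ext (hinj p.2 q.2 this)
  have hcard : Nat.card {p // IsLam p} ≤
      Nat.card {A : Set (Fin (n + 1)) // A ≠ ∅ ∧ A ≠ Set.univ} :=
    Nat.card_le_card_of_injective F hFinj
  have hcodcard : Nat.card {A : Set (Fin (n + 1)) // A ≠ ∅ ∧ A ≠ Set.univ} =
      2 ^ (n + 1) - 2 := by
    rw [Nat.card_eq_fintype_card]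
    have he : ∀ A : Set (Fin (n + 1)), (A ≠ ∅ ∧ A ≠ Set.univ) ↔
        ¬(A = ∅ ∨ A = Set.univ) := by
      intro A; push_neg; rfl
    rw [Fintype.card_congr (Equiv.subtypeEquivRight he)]
    rw [Fintype.card_subtype_compl fun A : Set (Fin (n + 1)) => A = ∅ ∨ A = Set.univ]
    have hdisj : Disjoint (fun A : Set (Fin (n + 1)) => A = ∅)
        (fun A : Set (Fin (n + 1)) => A = Set.univ) := by
      rw [Pi.disjoint_iff]
      intro A
      simp only [Prop.disjoint_iff]
      intro ⟨h1, h2⟩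
      have : (∅ : Set (Fin (n + 1))) = Set.univ := h1 ▸ h2
      exact absurd (this ▸ Set.mem_univ (0 : Fin (n + 1))) (Set.notMem_empty _)
    rw [Fintype.card_subtype_or_disjoint _ _ hdisj,
      Fintype.card_subtype_eq (∅ : Set (Fin (n + 1))),
      Fintype.card_subtype_eq (Set.univ : Set (Fin (n + 1))),
      Fintype.card_set, Fintype.card_fin]
  rw [hcodcard] at hcard
  exact hcard
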